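/- Define g_6 on [0,1] by g_6(0) = 0, g_6(x) = x/3 + 1/2 for 1/2 ≤ x ≤ 1, and g_6(x) = (k+2)x/3 + 1/(3·2^k) for 1/2^{k+1} ≤ x ≤ 1/2^k with k ≥ 1. Then g_6 is continuous on [0,1] and satisfies g_6(x) = (1/2)g_1(2x) + (1/2)g_2(2x) + (1/2)g_6(2x) + (1/2)g_2(2x−1) for all x in [0,1], where g_1 and g_2 are the explicit piecewise-affine functions g_1(x) = max(0, x − 1/2)/3 and g_2(x) = x/3 on [0,1], all functions being extended by 0 for x ≤ 0 and by their value at 1 for x ≥ 1. -/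

import Mathlib

/-- Extension of a function on `[0,1]`: `0` to the left of `0`, its value at `1`
to the right of `1`. -/
noncomputable def extBC (h : ℝ → ℝ) (y : ℝ) : ℝ :=
  if y ≤ 0 then 0 else if 1 ≤ y then h 1 else h y

/-- Explicit `g₁(x) = max(0, x−1/2)/3`. -/
noncomputable def dg1 (x : ℝ) : ℝ := max 0 (x - 1/2) / 3

/-- Explicit `g₂(x) = x/3`. -/
noncomputable def dg2 (x : ℝ) : ℝ := x / 3

/-- The function `g₆`, defined piecewise: `g₆(0)=0`, `g₆(x)=x/3+1/2` on `[1/2,1]`,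
and `g₆(x) = (k+2)x/3 + 1/(3·2^k)` on `[1/2^(k+1), 1/2^k]` for `k ≥ 1`. -/
noncomputable def dg6 (x : ℝ) : ℝ :=
  if x ≤ 0 then 0
  else if (1:ℝ)/2 ≤ x then x/3 + 1/2
  else ((⌊Real.logb 2 x⁻¹⌋ : ℝ) + 2) * x / 3 + 1 / (3 * (2:ℝ) ^ ⌊Real.logb 2 x⁻¹⌋)

private lemma floor_logb_aux (k : ℕ) {x : ℝ} (h1 : (1:ℝ)/2^(k+1) < x) (h2 : x ≤ 1/2^k) :
    ⌊Real.logb 2 x⁻¹⌋ = (k:ℤ) := by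
  have hx : 0 < x := lt_trans (by positivity) h1
  have hxi : (0:ℝ) < x⁻¹ := by positivity
  have ha : (2:ℝ)^k ≤ x⁻¹ := by
    rw [← one_div, le_div_iff₀ hx]
    calc (2:ℝ)^k * x ≤ 2^k * (1/2^k) := by gcongr
    _ = 1 := by field_simp
  have hb : x⁻¹ < (2:ℝ)^(k+1) := by
    rw [← one_div, div_lt_iff₀ hx]
    calc (1:ℝ) = 2^(k+1) * (1/2^(k+1)) := by field_simp
    _ < 2^(k+1) * x := by gcongr
  have h2' : ((2:ℝ):ℝ) = ((2:ℕ):ℝ) := by norm_num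
  rw [h2', Real.floor_logb_natCast hxi.le]
  have hle : (k:ℤ) ≤ Int.log 2 x⁻¹ := by
    rw [← Int.zpow_le_iff_le_log one_lt_two hxi]
    rw [zpow_natCast]; exact_mod_cast ha
  have hlt : Int.log 2 x⁻¹ < (k:ℤ) + 1 := by
    rw [← Int.lt_zpow_iff_log_lt one_lt_two hxi]
    rw [show (k:ℤ)+1 = ((k+1:ℕ):ℤ) by push_cast; ring, zpow_natCast]
    exact_mod_cast hb
  omega

/-- Key piecewise formula. -/
private lemma dg6_piece (k : ℕ) (hk : 1 ≤ k) {x : ℝ} (h1 : (1:ℝ)/2^(k+1) ≤ x)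
    (h2 : x ≤ 1/2^k) :
    dg6 x = ((k:ℝ) + 2) * x / 3 + 1 / (3 * 2^k) := by
  have hx : 0 < x := lt_of_lt_of_le (by positivity) h1
  rcases eq_or_lt_of_le h1 with he | h1'
  · -- x = 1/2^(k+1)
    have hlt : (1:ℝ)/2^(k+1+1) < x := by
      have hp : (0:ℝ) < 2^(k+1) := by positivity
      have hq : (2:ℝ)^(k+1) < 2^(k+1+1) := by
        calc (2:ℝ)^(k+1) < 2^(k+1) * 2 := by nlinarith
        _ = 2^(k+1+1) := (pow_succ _ _).symm
      rw [← he]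
      exact div_lt_div_of_pos_left one_pos hp hq
    have hf := floor_logb_aux (k+1) hlt (le_of_eq he.symm)
    have hx2 : x < 1/2 := by
      have h4 : (4:ℝ) ≤ 2^(k+1) := by
        calc (4:ℝ) = 2^2 := by norm_num
        _ ≤ 2^(k+1) := by
          apply pow_le_pow_right₀ (by norm_num) (by omega)
      have : (1:ℝ)/2^(k+1) ≤ 1/4 :=
        div_le_div_of_nonneg_left (by norm_num) (by norm_num) h4
      rw [← he] at *
      linarith
    rw [dg6, if_neg (not_le.mpr hx), if_neg (not_le.mpr hx2), hf, zpow_natCast]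
    rw [← he]
    push_cast
    have h2k : ((2:ℝ)^k) ≠ 0 := by positivity
    rw [pow_succ]
    field_simp
    ring
  · rcases lt_or_ge x (1/2) with hx2 | hx2
    · have hf := floor_logb_aux k h1' h2
      rw [dg6, if_neg (not_le.mpr hx), if_neg (not_le.mpr hx2), hf, zpow_natCast]
      push_cast
      ring
    · -- then k = 1 and x = 1/2
      have hk1 : k = 1 := by
        by_contra h
        have hk2 : 2 ≤ k := by omega
        have : (4:ℝ) ≤ 2^k := by
          calc (4:ℝ) = 2^2 := by norm_num
          _ ≤ 2^k := by apply pow_le_pow_right₀ one_le_two hk2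
        have : (1:ℝ)/2^k ≤ 1/4 := by
          apply div_le_div_of_nonneg_left (by norm_num) (by norm_num) this
        linarith [le_trans hx2 h2]
      subst hk1
      have hxe : x = 1/2 := le_antisymm (by simpa using h2) hx2
      rw [dg6, if_neg (not_le.mpr hx), if_pos hx2, hxe]
      norm_num

/-- Every `x ∈ (0,1]` lies in some dyadic piece. -/
private lemma exists_piece {x : ℝ} (h0 : 0 < x) (h1 : x ≤ 1) :
    ∃ k : ℕ, (1:ℝ)/2^(k+1) < x ∧ x ≤ 1/2^k := by
  have hex : ∃ n : ℕ, (1/2:ℝ)^n < x := exists_pow_lt_of_lt_one h0 (by norm_num)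
  classical
  have hn := Nat.find_spec hex
  set n := Nat.find hex with hn'
  have hnz : n ≠ 0 := by
    intro h
    rw [h] at hn
    simp at hn
    linarith
  refine ⟨n - 1, ?_, ?_⟩
  · have he : n - 1 + 1 = n := by omega
    rw [he, ← one_div_pow]
    exact hn
  · have hm := Nat.find_min hex (m := n-1) (by omega)
    push_neg at hm
    rw [← one_div_pow]
    exact hm

noncomputable def sfun (x : ℝ) : ℝ := ∑' n : ℕ, min (max x 0) ((1/2:ℝ)^n)

private lemma sfun_continuous : Continuous sfun := by
  apply continuous_tsum (u := fun n => (1/2:ℝ)^n)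
  · intro i
    exact (continuous_id.max continuous_const).min continuous_const
  · exact summable_geometric_of_lt_one (by norm_num) (by norm_num)
  · intro n x
    rw [Real.norm_eq_abs, abs_of_nonneg (le_min (le_max_right _ _) (by positivity))]
    exact min_le_right _ _

private lemma sfun_eq (k : ℕ) {x : ℝ} (h1 : (1:ℝ)/2^(k+1) ≤ x) (h2 : x ≤ 1/2^k) :
    sfun x = ((k:ℝ) + 1) * x + 1/2^k := by
  have hx : 0 ≤ x := le_trans (by positivity) h1
  have hmax : max x 0 = x := max_eq_left hx
  have hsum : Summable (fun n => min x ((1/2:ℝ)^n)) := by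
    apply Summable.of_nonneg_of_le (fun n => le_min hx (by positivity))
      (fun n => min_le_right _ _)
    exact summable_geometric_of_lt_one (by norm_num) (by norm_num)
  unfold sfun
  simp only [hmax]
  rw [← hsum.sum_add_tsum_nat_add (k+1)]
  have hA : ∑ i ∈ Finset.range (k+1), min x ((1/2:ℝ)^i) = ((k:ℝ)+1) * x := by
    have hcon : ∀ i ∈ Finset.range (k+1), min x ((1/2:ℝ)^i) = x := by
      intro i hi
      apply min_eq_left
      calc x ≤ 1/2^k := h2
      _ = (1/2:ℝ)^k := (one_div_pow 2 k).symm
      _ ≤ (1/2:ℝ)^i := by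
        apply pow_le_pow_of_le_one (by norm_num) (by norm_num)
        exact Nat.lt_succ_iff.mp (Finset.mem_range.mp hi)
    rw [Finset.sum_congr rfl hcon, Finset.sum_const, Finset.card_range, nsmul_eq_mul]
    push_cast; ring
  have hB : ∑' n : ℕ, min x ((1/2:ℝ)^(n+(k+1))) = 1/2^k := by
    have hmin : ∀ n : ℕ, min x ((1/2:ℝ)^(n+(k+1))) = (1/2:ℝ)^(k+1) * (1/2)^n := by
      intro n
      rw [min_eq_right, pow_add]
      · ring
      · calc (1/2:ℝ)^(n+(k+1)) ≤ (1/2:ℝ)^(k+1) := by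
              apply pow_le_pow_of_le_one (by norm_num) (by norm_num); omega
        _ = 1/2^(k+1) := one_div_pow 2 (k+1)
        _ ≤ x := h1
    rw [tsum_congr hmin, tsum_mul_left, tsum_geometric_of_lt_one (by norm_num) (by norm_num)]
    have h2k : ((2:ℝ)^k) ≠ 0 := by positivity
    rw [one_div_pow, pow_succ]
    field_simp
    ring
  rw [hA, hB]

private lemma two_pow_bound (k : ℕ) (hk : 1 ≤ k) : ((k:ℝ) + 2) ≤ 3/2 * 2^k := by
  have h : (k:ℝ) + 1 ≤ 2^k := by exact_mod_cast Nat.lt_two_pow_self (n := k)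
  have hk' : (1:ℝ) ≤ k := by exact_mod_cast hk
  nlinarith

private lemma dg6_cont : ContinuousOn dg6 (Set.Icc 0 1) := by
  have hc : Continuous fun x => min ((sfun x + max x 0)/3) (x/3 + 1/2) := by
    apply Continuous.min
    · exact ((sfun_continuous.add (continuous_id.max continuous_const)).div_const 3)
    · exact (continuous_id.div_const 3).add continuous_const
  apply hc.continuousOn.congr
  intro x hx
  rcases eq_or_lt_of_le hx.1 with h0 | h0
  · -- x = 0
    have hs : sfun 0 = 0 := by
      unfold sfun
      have : ∀ n : ℕ, min (max (0:ℝ) 0) ((1/2:ℝ)^n) = 0 := by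
        intro n
        rw [max_self, min_eq_left (by positivity)]
      rw [tsum_congr this, tsum_zero]
    rw [← h0]
    simp [dg6, hs]
  · obtain ⟨k, hk1, hk2⟩ := exists_piece h0 hx.2
    have hs := sfun_eq k hk1.le hk2
    have hmax : max x 0 = x := max_eq_left h0.le
    rcases Nat.eq_zero_or_pos k with rfl | hk
    · -- k = 0 : 1/2 < x
      have h12 : (1:ℝ)/2 < x := by simpa using hk1
      rw [dg6, if_neg (not_le.mpr h0), if_pos h12.le]
      simp only [hs, hmax]
      rw [min_eq_right (by push_cast; norm_num; linarith)]
    · have hd := dg6_piece k hk hk1.le hk2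
      rw [hd]
      simp only [hs, hmax]
      have h2k : (0:ℝ) < 2^k := by positivity
      rw [min_eq_left ?_]
      · field_simp
        ring
      · have hb := two_pow_bound k hk
        have hxle : ((k:ℝ)+1) * x ≤ ((k:ℝ)+1) * (1/2^k) := by
          apply mul_le_mul_of_nonneg_left hk2 (by positivity)
        have hdiv : ((k:ℝ)+2) / 2^k ≤ 3/2 := by
          rw [div_le_iff₀ h2k]
          linarith [hb]
        have : ((k:ℝ)+1) * (1/2^k) + 1/2^k = ((k:ℝ)+2)/2^k := by
          field_simp; ring
        linarith

/-- `g₆` has the announced piecewise-affine form, is continuous on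
`[0,1]`, and satisfies
`g₆(x) = ½g₁(2x) + ½g₂(2x) + ½g₆(2x) + ½g₂(2x−1)` on `[0,1]`
(with the extension convention). -/
theorem dichopile_g6 :
    dg6 0 = 0 ∧
    (∀ x ∈ Set.Icc ((1:ℝ)/2) 1, dg6 x = x/3 + 1/2) ∧
    (∀ k : ℕ, 1 ≤ k → ∀ x ∈ Set.Icc ((1:ℝ)/2^(k+1)) ((1:ℝ)/2^k),
      dg6 x = ((k:ℝ) + 2) * x / 3 + 1 / (3 * 2^k)) ∧
    ContinuousOn dg6 (Set.Icc 0 1) ∧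
    (∀ x ∈ Set.Icc (0:ℝ) 1,
      dg6 x = (1/2) * extBC dg1 (2*x) + (1/2) * extBC dg2 (2*x)
        + (1/2) * extBC dg6 (2*x) + (1/2) * extBC dg2 (2*x - 1)) := by
  have hdg61 : dg6 1 = 5/6 := by rw [dg6]; norm_num
  refine ⟨by simp [dg6], ?_, ?_, dg6_cont, ?_⟩
  · intro x hx
    have hx0 : ¬ (x ≤ 0) := by push_neg; linarith [hx.1]
    rw [dg6, if_neg hx0, if_pos hx.1]
  · intro k hk x hx
    exact dg6_piece k hk hx.1 hx.2
  · intro x hx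
    rcases eq_or_lt_of_le hx.1 with h0 | h0
    · rw [← h0]
      have e1 : extBC dg1 (2*0) = 0 := by rw [extBC, if_pos (by norm_num)]
      have e2 : extBC dg2 (2*0) = 0 := by rw [extBC, if_pos (by norm_num)]
      have e3 : extBC dg6 (2*0) = 0 := by rw [extBC, if_pos (by norm_num)]
      have e4 : extBC dg2 (2*0-1) = 0 := by rw [extBC, if_pos (by norm_num)]
      rw [e1, e2, e3, e4]
      simp [dg6]
    · rcases le_or_gt x (1/2) with hx2 | hx2
      · -- 0 < x ≤ 1/2
        have h2x0 : ¬ (2*x ≤ 0) := by push_neg; linarith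
        have e4 : extBC dg2 (2*x - 1) = 0 := by rw [extBC, if_pos (by linarith)]
        have e1 : extBC dg1 (2*x) = max 0 (2*x - 1/2) / 3 := by
          rw [extBC, if_neg h2x0]
          split_ifs with h
          · have hx1 : 2*x = 1 := le_antisymm (by linarith) h
            rw [dg1, ← hx1]
          · rfl
        have e2 : extBC dg2 (2*x) = 2*x/3 := by
          rw [extBC, if_neg h2x0]
          split_ifs with h
          · have hx1 : 2*x = 1 := le_antisymm (by linarith) h
            rw [dg2, ← hx1]
          · rfl
        have e3 : extBC dg6 (2*x) = dg6 (2*x) := by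
          rw [extBC, if_neg h2x0]
          split_ifs with h
          · have hx1 : 2*x = 1 := le_antisymm (by linarith) h
            rw [← hx1]
          · rfl
        rw [e1, e2, e3, e4]
        obtain ⟨k, hk1, hk2⟩ := exists_piece h0 hx.2
        have hk : 1 ≤ k := by
          by_contra h
          have : k = 0 := by omega
          subst this
          simp at hk1
          linarith
        have hd := dg6_piece k hk hk1.le hk2
        rw [hd]
        obtain ⟨m, rfl⟩ : ∃ m, k = m + 1 := ⟨k - 1, by omega⟩
        rcases Nat.eq_zero_or_pos m with rfl | hm
        · -- k = 1: x ∈ (1/4,1/2], 2x ∈ (1/2,1]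
          have h12 : (1:ℝ)/2 ≤ 2*x := by
            norm_num at hk1
            linarith
          rw [dg6, if_neg (by push_neg; linarith), if_pos h12]
          have hmx : max 0 (2*x - 1/2) = 2*x - 1/2 := by
            apply max_eq_right; norm_num at hk1; linarith
          rw [hmx]
          push_cast
          ring
        · -- k = m+1 ≥ 2: 2x ≤ 1/2^m ≤ 1/2
          have hm2 : (2:ℝ) ≤ 2^m := by
            calc (2:ℝ) = 2^1 := by norm_num
            _ ≤ 2^m := by apply pow_le_pow_right₀ (by norm_num) hm
          have ha : (1:ℝ)/2^(m+1) ≤ 2*x := by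
            have : (2:ℝ) * (1/2^(m+1+1)) = 1/2^(m+1) := by
              rw [pow_succ]; field_simp
            linarith [hk1]
          have hb' : 2*x ≤ 1/2^m := by
            have : (2:ℝ) * (1/2^(m+1)) = 1/2^m := by
              rw [pow_succ]; field_simp
            linarith [hk2]
          have hd2 := dg6_piece m hm ha hb'
          rw [hd2]
          have hmx : max 0 (2*x - 1/2) = 0 := by
            apply max_eq_left
            have : (1:ℝ)/2^m ≤ 1/2 := by
              apply div_le_div_of_nonneg_left (by norm_num) (by norm_num) hm2
            linarith
          rw [hmx]
          have h2m : ((2:ℝ)^m) ≠ 0 := by positivity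
          push_cast
          field_simp
          ring
      · -- 1/2 < x ≤ 1
        have h1le : (1:ℝ) ≤ 2*x := by linarith
        have e1 : extBC dg1 (2*x) = 1/6 := by
          rw [extBC, if_neg (by push_neg; linarith), if_pos h1le, dg1]
          norm_num
        have e2 : extBC dg2 (2*x) = 1/3 := by
          rw [extBC, if_neg (by push_neg; linarith), if_pos h1le, dg2]
        have e3 : extBC dg6 (2*x) = 5/6 := by
          rw [extBC, if_neg (by push_neg; linarith), if_pos h1le, hdg61]
        have e4 : extBC dg2 (2*x - 1) = (2*x-1)/3 := by
          rw [extBC]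
          split_ifs with h h'
          · exfalso; linarith
          · have : 2*x - 1 = 1 := le_antisymm (by linarith [hx.2]) h'
            rw [dg2, this]
          · rfl
        rw [e1, e2, e3, e4, dg6, if_neg (by push_neg; linarith), if_pos (by linarith)]
        linarith
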